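/- If x, y, z ∈ Z[G12] satisfy x·u12 + y·b1 + z·b2 = 0 in A_2(G12), then there exist y', y'', z', z'' ∈ Z[G12] such that x = z'·N2 + y'·N1, y = −(σ2−1)·y' + (σ1−1)·y'' and z = (σ1−1)·z' + (σ2−1)·z''. Equivalently, the relations among u12, b1, b2 are generated over Z[G12] by (σ1−1)·b1 = 0, (σ2−1)·b2 = 0, (σ2−1)·b1 = N1·u12 and −(σ1−1)·b2 = N2·u12. -/

import Mathlib

open MonoidAlgebra

set_option maxHeartbeats 1000000
set_option synthInstance.maxHeartbeats 400000

noncomputable section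

/-! ## Generic (unbundled) group-cohomology notions in low degree -/

/-- `f : G → A` is a 1-cocycle for the (unbundled) action `act`. -/
def IsOneCocycle {G : Type*} [Group G] {A : Type*} [AddCommGroup A]
    (act : G → A → A) (f : G → A) : Prop :=
  ∀ g h : G, f (g * h) = act g (f h) + f g

/-- `f : G → A` is a 1-coboundary for the (unbundled) action `act`. -/
def IsOneCoboundary {G : Type*} [Group G] {A : Type*} [AddCommGroup A]
    (act : G → A → A) (f : G → A) : Prop :=
  ∃ a : A, ∀ g : G, f g = act g a - a

/-- `f : G → G → A` is a 2-coboundary for the (unbundled) action `act`. -/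
def IsTwoCoboundary {G : Type*} [Group G] {A : Type*} [AddCommGroup A]
    (act : G → A → A) (f : G → G → A) : Prop :=
  ∃ c : G → A, ∀ g h : G, f g h = act g (c h) - c (g * h) + c g

/-- restriction of an (unbundled) action to a subgroup. -/
def resAct {G : Type*} [Group G] {A : Type*} (H : Subgroup G) (act : G → A → A) :
    H → A → A := fun h => act (h : G)

/-! ## Augmentation ideal for a general group -/

/-- the augmentation map `Z[G] → Z`. -/
def augGen (G : Type*) [Group G] : MonoidAlgebra ℤ G →+* ℤ :=
  (MonoidAlgebra.lift ℤ ℤ G 1).toRingHom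

/-- the augmentation ideal `I[G] ⊆ Z[G]`. -/
def IGen (G : Type*) [Group G] : Ideal (MonoidAlgebra ℤ G) := RingHom.ker (augGen G)

/-- the action of `G` on `I[G]` by left multiplication. -/
def actIGen (G : Type*) [Group G] (g : G) (y : ↥(IGen G)) : ↥(IGen G) :=
  ⟨of ℤ G g * y.val, by
    have h0 : augGen G y.val = 0 := y.2
    simp [IGen, RingHom.mem_ker, map_mul, h0]⟩

/-- the distinguished 1-cocycle `d_H : H → I[G]`, `h ↦ h - 1`. -/
def dGen {G : Type*} [Group G] (H : Subgroup G) (h : H) : ↥(IGen G) :=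
  ⟨of ℤ G (h : G) - 1, by simp [IGen, RingHom.mem_ker, map_sub, augGen]⟩

/-! ## The groups of the paper -/

/-- the elementary abelian group `G₁₂` of order `p²`. -/
abbrev G12t (p : ℕ) := Multiplicative (ZMod p × ZMod p)
/-- a cyclic group of order `p`. -/
abbrev Cpt (p : ℕ) := Multiplicative (ZMod p)
/-- the elementary abelian group `G = ⟨σ₁⟩ × ⟨σ₂⟩ × ⟨σ₃⟩ × ⟨σ₄⟩` of order `p⁴`. -/
abbrev Gp (p : ℕ) := Multiplicative (ZMod p × ZMod p × ZMod p × ZMod p)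

def t1 (p : ℕ) : G12t p := Multiplicative.ofAdd (1, 0)
def t2 (p : ℕ) : G12t p := Multiplicative.ofAdd (0, 1)
def c1g (p : ℕ) : Cpt p := Multiplicative.ofAdd 1
def s1 (p : ℕ) : Gp p := Multiplicative.ofAdd (1, 0, 0, 0)
def s2 (p : ℕ) : Gp p := Multiplicative.ofAdd (0, 1, 0, 0)
def s3 (p : ℕ) : Gp p := Multiplicative.ofAdd (0, 0, 1, 0)
def s4 (p : ℕ) : Gp p := Multiplicative.ofAdd (0, 0, 0, 1)

/-- the group ring `Z[G₁₂]`. -/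
abbrev R12 (p : ℕ) := MonoidAlgebra ℤ (G12t p)
/-- the group ring `Z[⟨σ⟩]` of a cyclic group of order `p`. -/
abbrev RCp (p : ℕ) := MonoidAlgebra ℤ (Cpt p)
/-- the group ring `Z[G]`. -/
abbrev RG (p : ℕ) := MonoidAlgebra ℤ (Gp p)

/-- the quotient map `G → G₁₂ = G/G₃₄`. -/
def π12 (p : ℕ) : Gp p →* G12t p :=
  AddMonoidHom.toMultiplicative
    { toFun := fun v => (v.1, v.2.1), map_zero' := rfl, map_add' := fun _ _ => rfl }

/-- the quotient map `G → ⟨σ₃⟩ = G/⟨σ₁,σ₂,σ₄⟩`. -/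
def π3 (p : ℕ) : Gp p →* Cpt p :=
  AddMonoidHom.toMultiplicative
    { toFun := fun v => v.2.2.1, map_zero' := rfl, map_add' := fun _ _ => rfl }

/-- the quotient map `G → ⟨σ₄⟩ = G/⟨σ₁,σ₂,σ₃⟩`. -/
def π4 (p : ℕ) : Gp p →* Cpt p :=
  AddMonoidHom.toMultiplicative
    { toFun := fun v => v.2.2.2, map_zero' := rfl, map_add' := fun _ _ => rfl }

/-- the inclusion `G₁₂ → G`. -/
def emb12 (p : ℕ) : G12t p →* Gp p :=
  AddMonoidHom.toMultiplicative
    { toFun := fun v => (v.1, v.2, 0, 0), map_zero' := rfl,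
      map_add' := fun _ _ => by ext <;> simp }

/-- the subgroup `G₁₂ = ⟨σ₁, σ₂⟩ ≤ G`. -/
def G12sub (p : ℕ) : Subgroup (Gp p) := Subgroup.closure {s1 p, s2 p}
/-- the subgroup `G₃₄ = ⟨σ₃, σ₄⟩ ≤ G`. -/
def G34sub (p : ℕ) : Subgroup (Gp p) := Subgroup.closure {s3 p, s4 p}

/-! ## The lattice `A₂(G₁₂)` and its distinguished elements -/

/-- the map `Z[G₁₂]·d₁ ⊕ Z[G₁₂]·d₂ → I[G₁₂] ⊆ Z[G₁₂]`, `dᵢ ↦ σᵢ - 1`. -/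
def d12map (p : ℕ) : (R12 p × R12 p) →ₗ[R12 p] R12 p :=
  (LinearMap.toSpanSingleton (R12 p) (R12 p) (of ℤ (G12t p) (t1 p) - 1)).comp
      (LinearMap.fst (R12 p) (R12 p) (R12 p)) +
  (LinearMap.toSpanSingleton (R12 p) (R12 p) (of ℤ (G12t p) (t2 p) - 1)).comp
      (LinearMap.snd (R12 p) (R12 p) (R12 p))

/-- the lattice `A₂(G₁₂)`, the kernel of `Z[G₁₂]·d₁ ⊕ Z[G₁₂]·d₂ → I[G₁₂]`. -/
def A2G12 (p : ℕ) : Submodule (R12 p) (R12 p × R12 p) := LinearMap.ker (d12map p)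

/-- `u₁₂ = (σ₂-1)d₁ - (σ₁-1)d₂` as an element of `Z[G₁₂]·d₁ ⊕ Z[G₁₂]·d₂`. -/
def u12raw (p : ℕ) : R12 p × R12 p :=
  (of ℤ (G12t p) (t2 p) - 1, -(of ℤ (G12t p) (t1 p) - 1))

/-- the norm element `N = 1 + g + ⋯ + g^(p-1)` of a group ring. -/
def NN (p : ℕ) {G : Type*} [CommGroup G] (g : G) : MonoidAlgebra ℤ G :=
  ∑ k ∈ Finset.range p, of ℤ G g ^ k

/-- `b₁ = N₁·d₁`. -/
def b1raw (p : ℕ) : R12 p × R12 p := (NN p (t1 p), 0)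
/-- `b₂ = N₂·d₂`. -/
def b2raw (p : ℕ) : R12 p × R12 p := (0, NN p (t2 p))

lemma ofAdd_pow_p (p : ℕ) {A : Type*} [AddCommGroup A] (a : A) (h : p • a = 0) :
    (Multiplicative.ofAdd a) ^ p = 1 := by
  rw [← ofAdd_nsmul, h]; rfl

lemma zmod_p_smul (p : ℕ) (x : ZMod p) : p • x = 0 := by
  rw [nsmul_eq_mul, ZMod.natCast_self, zero_mul]

lemma t1_pow_p (p : ℕ) : (t1 p) ^ p = 1 := by
  refine ofAdd_pow_p p _ ?_
  rw [Prod.smul_mk, zmod_p_smul, zmod_p_smul]; rfl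

lemma t2_pow_p (p : ℕ) : (t2 p) ^ p = 1 := by
  refine ofAdd_pow_p p _ ?_
  rw [Prod.smul_mk, zmod_p_smul, zmod_p_smul]; rfl

lemma c1g_pow_p (p : ℕ) : (c1g p) ^ p = 1 := by
  refine ofAdd_pow_p p _ (zmod_p_smul p _)

lemma NN_mul (p : ℕ) {G : Type*} [CommGroup G] (g : G) (h : g ^ p = 1) :
    NN p g * (of ℤ G g - 1) = 0 := by
  rw [NN, geom_sum_mul, ← map_pow, h, map_one, sub_self]

lemma u12raw_mem (p : ℕ) : u12raw p ∈ A2G12 p := by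
  simp only [A2G12, LinearMap.mem_ker, d12map, LinearMap.add_apply, LinearMap.comp_apply,
    LinearMap.fst_apply, LinearMap.snd_apply, LinearMap.toSpanSingleton_apply, u12raw,
    smul_eq_mul]
  ring

lemma b1raw_mem (p : ℕ) : b1raw p ∈ A2G12 p := by
  simp only [A2G12, LinearMap.mem_ker, d12map, LinearMap.add_apply, LinearMap.comp_apply,
    LinearMap.fst_apply, LinearMap.snd_apply, LinearMap.toSpanSingleton_apply, b1raw,
    smul_eq_mul, zero_mul, add_zero]
  exact NN_mul p _ (t1_pow_p p)

lemma b2raw_mem (p : ℕ) : b2raw p ∈ A2G12 p := by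
  simp only [A2G12, LinearMap.mem_ker, d12map, LinearMap.add_apply, LinearMap.comp_apply,
    LinearMap.fst_apply, LinearMap.snd_apply, LinearMap.toSpanSingleton_apply, b2raw,
    smul_eq_mul, zero_mul, zero_add]
  exact NN_mul p _ (t2_pow_p p)

/-- `u₁₂` as an element of `A₂(G₁₂)`. -/
def u12e (p : ℕ) : ↥(A2G12 p) := ⟨u12raw p, u12raw_mem p⟩
/-- `b₁` as an element of `A₂(G₁₂)`. -/
def b1e (p : ℕ) : ↥(A2G12 p) := ⟨b1raw p, b1raw_mem p⟩
/-- `b₂` as an element of `A₂(G₁₂)`. -/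
def b2e (p : ℕ) : ↥(A2G12 p) := ⟨b2raw p, b2raw_mem p⟩

/-- the action of `G₁₂` on `A₂(G₁₂)`. -/
def actA2 (p : ℕ) (x : G12t p) (v : ↥(A2G12 p)) : ↥(A2G12 p) :=
  of ℤ (G12t p) x • v

/-! ## The cyclic lattice `A₂(⟨σ⟩)` -/

/-- the map `Z[⟨σ⟩]·d → I[⟨σ⟩]`, `d ↦ σ - 1`. -/
def dcmap (p : ℕ) : RCp p →ₗ[RCp p] RCp p :=
  LinearMap.toSpanSingleton (RCp p) (RCp p) (of ℤ (Cpt p) (c1g p) - 1)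

/-- the lattice `A₂(⟨σ⟩)` for a cyclic group of order `p`. -/
def A2C (p : ℕ) : Submodule (RCp p) (RCp p) := LinearMap.ker (dcmap p)

/-- the norm element `N = 1 + σ + ⋯ + σ^(p-1)` as an element of `A₂(⟨σ⟩)`. -/
def NCe (p : ℕ) : ↥(A2C p) :=
  ⟨NN p (c1g p), by
    simp only [A2C, LinearMap.mem_ker, dcmap, LinearMap.toSpanSingleton_apply, smul_eq_mul]
    exact NN_mul p _ (c1g_pow_p p)⟩

/-- the action of `G` on `A₂(⟨σⱼ⟩)` through a projection `π : G → ⟨σⱼ⟩`. -/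
def actCvia (p : ℕ) (π : Gp p →* Cpt p) (g : Gp p) (v : ↥(A2C p)) : ↥(A2C p) :=
  of ℤ (Cpt p) (π g) • v

/-! ## The explicit canonical 2-cocycles -/

/-- the elements `u_{m,n} ∈ A₂(G₁₂)` (equation (13) of the paper). -/
def umn (p : ℕ) (m1 m2 n1 n2 : ℕ) : ↥(A2G12 p) :=
  (-(of ℤ (G12t p) (t1 p ^ m1) * ∑ j ∈ Finset.range n1, ∑ i ∈ Finset.range m2,
      of ℤ (G12t p) (t1 p ^ i * t2 p ^ j))) • u12e p +
  (of ℤ (G12t p) (t1 p ^ n1) * ∑ j ∈ Finset.range n2, ∑ i ∈ Finset.range m1,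
      of ℤ (G12t p) (t1 p ^ i * t2 p ^ j)) • u12e p

/-- the explicit 2-cocycle `c₁₂` representing the canonical class `[c_{G₁₂}]`. -/
def c12coc (p : ℕ) (x y : G12t p) : ↥(A2G12 p) :=
  let m1 := (Multiplicative.toAdd x).1.val
  let m2 := (Multiplicative.toAdd x).2.val
  let n1 := (Multiplicative.toAdd y).1.val
  let n2 := (Multiplicative.toAdd y).2.val
  of ℤ (G12t p) (t1 p ^ m1) • umn p 0 m2 n1 0 +
    ((m1 + n1) / p) • b1e p +
    ((m2 + n2) / p) • (of ℤ (G12t p) (t1 p ^ ((m1 + n1) % p)) • b2e p)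

/-- the explicit 2-cocycle representing the canonical class of a cyclic group of
order `p` with coefficients in `A₂(⟨σ⟩)`. -/
def ccyc (p : ℕ) (x y : Cpt p) : ↥(A2C p) :=
  if p ≤ (Multiplicative.toAdd x).val + (Multiplicative.toAdd y).val then NCe p else 0

/-! ## The lattice `Q = A₂(G₁₂) ⊕ K₃ ⊕ K₄` -/

/-- `K_j = A₂(⟨σⱼ⟩) ⊕ Z[⟨σⱼ⟩]`. -/
abbrev Kc (p : ℕ) := ↥(A2C p) × RCp p

/-- the carrier of the `G`-lattice `Q = A₂(G₁₂) ⊕ K₃ ⊕ K₄`. -/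
abbrev Qc (p : ℕ) := ↥(A2G12 p) × Kc p × Kc p

/-- the action of `G` on `Q`: `G₁₂` acts naturally on `A₂(G₁₂)` and trivially on
`K₃`, `K₄`; `⟨σⱼ⟩` acts naturally on `K_j` and trivially elsewhere. -/
def actQ (p : ℕ) (g : Gp p) (q : Qc p) : Qc p :=
  (of ℤ (G12t p) (π12 p g) • q.1,
   (of ℤ (Cpt p) (π3 p g) • q.2.1.1, of ℤ (Cpt p) (π3 p g) * q.2.1.2),
   (of ℤ (Cpt p) (π4 p g) • q.2.2.1, of ℤ (Cpt p) (π4 p g) * q.2.2.2))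

/-- the 2-cocycle `ω = inf(c₁₂) - inf(c₃) - inf(c₄)` with values in `Q`. -/
def ωc (p : ℕ) (g g' : Gp p) : Qc p :=
  (c12coc p (π12 p g) (π12 p g'),
   (-(ccyc p (π3 p g) (π3 p g')), 0),
   (-(ccyc p (π4 p g) (π4 p g')), 0))

/-- the order of the restriction of `[ω]` to a subgroup `H ≤ G` in `H²(H, Q)`. -/
def nOrd (p : ℕ) (H : Subgroup (Gp p)) : ℕ :=
  sInf {n : ℕ | 0 < n ∧
    IsTwoCoboundary (resAct H (actQ p)) fun h h' => n • ωc p (h : Gp p) (h' : Gp p)}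

/-! ## The augmentation ideal `I[G]` and the lattice `M_ω` -/

/-- the augmentation map `Z[G] → Z`. -/
def aug (p : ℕ) : RG p →+* ℤ := (MonoidAlgebra.lift ℤ ℤ (Gp p) 1).toRingHom

/-- the augmentation ideal `I[G]`. -/
def IG (p : ℕ) : Ideal (RG p) := RingHom.ker (aug p)

/-- the action of `G` on `I[G]` by left multiplication. -/
def actIG (p : ℕ) (g : Gp p) (y : ↥(IG p)) : ↥(IG p) :=
  ⟨of ℤ (Gp p) g * y.val, by
    have h0 : aug p y.val = 0 := y.2
    simp [IG, RingHom.mem_ker, map_mul, h0]⟩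

/-- the 1-cocycle `d_H : H → I[G]`, `h ↦ h - 1`. -/
def dH (p : ℕ) (H : Subgroup (Gp p)) (h : H) : ↥(IG p) :=
  ⟨of ℤ (Gp p) (h : Gp p) - 1, by simp [IG, RingHom.mem_ker, map_sub, aug]⟩

/-- the carrier of the `G`-lattice `M_ω = Q ⊕ I[G]`. -/
abbrev Mc (p : ℕ) := Qc p × ↥(IG p)

/-- the `Q`-valued correction term of the twisted action on `M_ω`:
`θ(g, Σ a_{g'} g') = Σ a_{g'} ω(g, g')`; on `y ∈ I[G]` (so `Σ a_{g'} = 0` and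
`y = Σ a_{g'} (g' - 1)`) this is the `Q`-component of `g·(0, y)`. -/
def θω (p : ℕ) (g : Gp p) (y : RG p) : Qc p :=
  Finsupp.sum y.coeff fun g' a => a • ωc p g g'

/-- the twisted action of `G` on `M_ω = Q ⊕ I[G]`: `g(x,0) = (gx, 0)` and
`g(0, g'-1) = (ω(g,g'), g(g'-1))`, extended `Z`-linearly. -/
def actM (p : ℕ) (g : Gp p) (m : Mc p) : Mc p :=
  (actQ p g m.1 + θω p g m.2.val, actIG p g m.2)

/-! ## The map `π : A₂(G₁₂) → Z/pZ` -/

/-- the `G₁₂`-module homomorphism `π : A₂(G₁₂) → Z/pZ`, determined by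
`π(x·u₁₂ + y·b₁ + z·b₂) = ε(x) mod p`; concretely it sends `v = (v₁, v₂)` to
`Σ_g v₁(g)·(exponent of σ₂ in g)`. -/
def πmap (p : ℕ) (v : ↥(A2G12 p)) : ZMod p :=
  Finsupp.sum (v : R12 p × R12 p).1.coeff fun g a => (a : ZMod p) * (Multiplicative.toAdd g).2

/-! ## The set `𝓗` of subgroups, the cochains `v_H`, and the lattice `M` -/

/-- the set of subgroups `𝓗 = {G} ∪ {⟨τ, σ₃, σ₄⟩ : τ ∈ G₁₂}`. -/
def HH (p : ℕ) : Set (Subgroup (Gp p)) :=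
  insert ⊤ {H | ∃ τ ∈ G12sub p, H = Subgroup.closure {τ, s3 p, s4 p}}

/-- the 1-cochain `v_H : H₁₂ → A₂(G₁₂)`, `v_H(h̄₁) = Σ_{h̄ ∈ H₁₂} c₁₂(h̄₁, h̄)`,
here inflated to a function of `h̄₁ ∈ G₁₂`. -/
def vH (p : ℕ) (H : Subgroup (Gp p)) (x : G12t p) : ↥(A2G12 p) :=
  ∑ᶠ h' : ↥(H.map (π12 p)), c12coc p x (h' : G12t p)

/-- the 1-cochain `f_H : H → M_ω`, `f_H(h) = (z_H(h) - v_H(h̄), n_H·(h-1))`,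
built from a choice of 1-cochain `z_H : H → K₃ ⊕ K₄`. -/
def fHof (p : ℕ) (H : Subgroup (Gp p)) (zH : H → Kc p × Kc p) (h : H) : Mc p :=
  ((-(vH p H (π12 p (h : Gp p))), (zH h).1, (zH h).2),
   (nOrd p H) • dH p H h)

/-- the carrier of the permutation lattice `P = ⊕_{H ∈ 𝓗} Z[G/H]`. -/
abbrev Pc (p : ℕ) := ∀ H : ↥(HH p), ((Gp p ⧸ (H : Subgroup (Gp p))) →₀ ℤ)

/-- the carrier of the `G`-lattice `M = M_ω ⊕ P`. -/
abbrev MC (p : ℕ) := Mc p × Pc p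

/-- the action of `G` on `M = M_ω ⊕ P`, twisted by a family of 1-cocycles
`f_H : H → M_ω` (`H ∈ 𝓗`): `g(x, 0) = (gx, 0)` and
`g(0, u_{gᵢH}) = (gⱼ·f_H(h), u_{gⱼH})` where `g·gᵢ = gⱼ·h`, `h ∈ H`, and the coset
representatives are chosen by `Quotient.out`. -/
def actMFull (p : ℕ) (fH : ∀ H : ↥(HH p), (↥(H.val) → Mc p))
    (g : Gp p) (m : MC p) : MC p :=
  (actM p g m.1 +
     ∑ᶠ H : ↥(HH p), Finsupp.sum (m.2 H) fun c a =>
       a • actM p (Quotient.out (g • c))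
         (fH H ⟨(Quotient.out (g • c))⁻¹ * (g * Quotient.out c), by
            rw [← QuotientGroup.eq, QuotientGroup.out_eq', ← smul_eq_mul,
              MulAction.Quotient.mk_smul_out]⟩),
   fun H => Finsupp.mapDomain (fun c => g • c) (m.2 H))

/-- the map `π' : M → Z/pZ`, `(x₀, x₁, x₂, y, z) ↦ π(x₀)`. -/
def πmap' (p : ℕ) (m : MC p) : ZMod p := πmap p m.1.1.1

/-- the norm element `N₃₄ = Σ_{g ∈ G₃₄} g ∈ Z[G]`. -/
def N34 (p : ℕ) : RG p := ∑ᶠ g : ↥(G34sub p), of ℤ (Gp p) (g : Gp p)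

/-- the augmentation map `Z[G₁₂] → Z`. -/
def aug12 (p : ℕ) : R12 p →+* ℤ := (MonoidAlgebra.lift ℤ ℤ (G12t p) 1).toRingHom

namespace Aux12

variable {p : ℕ}

def ee (p : ℕ) (i j : ZMod p) : G12t p := Multiplicative.ofAdd (i, j)

lemma ee_mul (i j a b : ZMod p) : ee p i j * ee p a b = ee p (i + a) (j + b) := rfl

lemma ee_inv (a b : ZMod p) : (ee p a b)⁻¹ = ee p (-a) (-b) := rfl

lemma t1_eq_ee : t1 p = ee p 1 0 := rfl
lemma t2_eq_ee : t2 p = ee p 0 1 := rfl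

lemma ee_mul_inv (i j a b : ZMod p) : ee p i j * (ee p a b)⁻¹ = ee p (i - a) (j - b) := by
  rw [ee_inv, ee_mul, ← sub_eq_add_neg, ← sub_eq_add_neg]

lemma ee_inv_mul (i j a b : ZMod p) : (ee p a b)⁻¹ * ee p i j = ee p (i - a) (j - b) := by
  rw [ee_inv, ee_mul, neg_add_eq_sub, neg_add_eq_sub]

lemma coeff_mul_single (f : R12 p) (a b i j : ZMod p) :
    (f * MonoidAlgebra.single (ee p a b) (1 : ℤ)).coeff (ee p i j) = f.coeff (ee p (i - a) (j - b)) := by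
  rw [MonoidAlgebra.mul_single_apply, mul_one, ee_mul_inv]

lemma coeff_single_mul (f : R12 p) (a b i j : ZMod p) :
    (MonoidAlgebra.single (ee p a b) (1 : ℤ) * f).coeff (ee p i j) = f.coeff (ee p (i - a) (j - b)) := by
  rw [MonoidAlgebra.single_mul_apply, one_mul, ee_inv_mul]

lemma sum_range_cast [NeZero p] {M : Type*} [AddCommMonoid M] (h : ZMod p → M) :
    ∑ k ∈ Finset.range p, h (k : ZMod p) = ∑ c : ZMod p, h c := by
  have himg : (Finset.range p).image (Nat.cast : ℕ → ZMod p) = Finset.univ :=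
    Finset.eq_univ_of_forall fun c => Finset.mem_image.2
      ⟨c.val, Finset.mem_range.2 (ZMod.val_lt c), ZMod.natCast_rightInverse c⟩
  rw [← himg, Finset.sum_image]
  intro k hk l hl hkl
  have := congrArg ZMod.val hkl
  rwa [ZMod.val_cast_of_lt (Finset.mem_range.1 hk),
    ZMod.val_cast_of_lt (Finset.mem_range.1 hl)] at this

lemma t1_pow (k : ℕ) : (t1 p) ^ k = ee p (k : ZMod p) 0 := by
  show (Multiplicative.ofAdd ((1 : ZMod p), (0 : ZMod p))) ^ k = _
  rw [← ofAdd_nsmul]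
  show Multiplicative.ofAdd (k • (1 : ZMod p), k • (0 : ZMod p)) = _
  rw [smul_zero, nsmul_eq_mul, mul_one]
  rfl

lemma t2_pow (k : ℕ) : (t2 p) ^ k = ee p 0 (k : ZMod p) := by
  show (Multiplicative.ofAdd ((0 : ZMod p), (1 : ZMod p))) ^ k = _
  rw [← ofAdd_nsmul]
  show Multiplicative.ofAdd (k • (0 : ZMod p), k • (1 : ZMod p)) = _
  rw [smul_zero, nsmul_eq_mul, mul_one]
  rfl

lemma NN_t1 [NeZero p] :
    NN p (t1 p) = ∑ c : ZMod p, MonoidAlgebra.single (ee p c 0) (1 : ℤ) := by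
  rw [NN, ← sum_range_cast (p := p) (fun c => MonoidAlgebra.single (ee p c 0) (1 : ℤ))]
  refine Finset.sum_congr rfl fun k _ => ?_
  rw [← map_pow, t1_pow, MonoidAlgebra.of_apply]

lemma NN_t2 [NeZero p] :
    NN p (t2 p) = ∑ c : ZMod p, MonoidAlgebra.single (ee p 0 c) (1 : ℤ) := by
  rw [NN, ← sum_range_cast (p := p) (fun c => MonoidAlgebra.single (ee p 0 c) (1 : ℤ))]
  refine Finset.sum_congr rfl fun k _ => ?_
  rw [← map_pow, t2_pow, MonoidAlgebra.of_apply]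

lemma coeff_mul_NN1 [NeZero p] (f : R12 p) (i j : ZMod p) :
    (f * NN p (t1 p)).coeff (ee p i j) = ∑ c : ZMod p, f.coeff (ee p c j) := by
  rw [NN_t1, Finset.mul_sum, MonoidAlgebra.coeff_sum, Finsupp.finset_sum_apply]
  simp only [coeff_mul_single, sub_zero]
  exact Equiv.sum_comp (Equiv.subLeft i) (fun c => f.coeff (ee p c j))

lemma coeff_mul_NN2 [NeZero p] (f : R12 p) (i j : ZMod p) :
    (f * NN p (t2 p)).coeff (ee p i j) = ∑ c : ZMod p, f.coeff (ee p i c) := by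
  rw [NN_t2, Finset.mul_sum, MonoidAlgebra.coeff_sum, Finsupp.finset_sum_apply]
  simp only [coeff_mul_single, sub_zero]
  exact Equiv.sum_comp (Equiv.subLeft j) (fun c => f.coeff (ee p i c))

def mk (p : ℕ) [NeZero p] (c : ZMod p → ZMod p → ℤ) : R12 p :=
  MonoidAlgebra.ofCoeff (Finsupp.equivFunOnFinite.symm fun g : G12t p => c (Multiplicative.toAdd g).1 (Multiplicative.toAdd g).2)

lemma mk_apply [NeZero p] (c : ZMod p → ZMod p → ℤ) (i j : ZMod p) :
    (mk p c).coeff (ee p i j) = c i j :=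
  rfl

def bld (p : ℕ) (W : ZMod p → ℤ) (i : ZMod p) : ℤ := -∑ k ∈ Finset.Icc 1 i.val, W (k : ZMod p)

lemma bld_step [NeZero p] (hp2 : 1 < p) (W : ZMod p → ℤ) (hW : ∑ c : ZMod p, W c = 0) (i : ZMod p) :
    bld p W (i - 1) - bld p W i = W i := by
  haveI : NeZero p := ⟨by omega⟩
  by_cases hi : i = 0
  · subst hi
    have h1 : ((0 : ZMod p) - 1) = ((p - 1 : ℕ) : ZMod p) := by
      rw [Nat.cast_sub (by omega), Nat.cast_one, ZMod.natCast_self]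
    have hval : ((0 : ZMod p) - 1).val = p - 1 := by
      rw [h1, ZMod.val_cast_of_lt (by omega)]
    have h0 : Finset.Icc 1 (0 : ZMod p).val = ∅ := by
      rw [ZMod.val_zero]; exact Finset.Icc_eq_empty (by omega)
    rw [bld, bld, hval, h0, Finset.sum_empty, neg_zero, sub_zero]
    have hins : Finset.range p = insert 0 (Finset.Icc 1 (p - 1)) := by
      ext k; simp only [Finset.mem_range, Finset.mem_insert, Finset.mem_Icc]; omega
    have hs := sum_range_cast (p := p) W
    rw [hins, Finset.sum_insert (by simp), hW, Nat.cast_zero] at hs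
    linarith
  · have hv : 1 ≤ i.val :=
      Nat.one_le_iff_ne_zero.2 fun h => hi ((ZMod.val_eq_zero i).1 h)
    have h1 : i - 1 = ((i.val - 1 : ℕ) : ZMod p) := by
      conv_lhs => rw [← ZMod.natCast_rightInverse i]
      rw [Nat.cast_sub hv, Nat.cast_one]
    have hval : (i - 1).val = i.val - 1 := by
      rw [h1, ZMod.val_cast_of_lt (lt_of_le_of_lt (Nat.sub_le _ _) (ZMod.val_lt i))]
    have hins : Finset.Icc 1 i.val = insert i.val (Finset.Icc 1 (i.val - 1)) := by
      ext k; simp only [Finset.mem_insert, Finset.mem_Icc]; omega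
    rw [bld, bld, hval, hins, Finset.sum_insert (by simp only [Finset.mem_Icc]; omega),
      ZMod.natCast_rightInverse i]
    ring

lemma const_of_step [NeZero p] (f : ZMod p → ℤ) (h : ∀ i, f (i - 1) = f i) (i : ZMod p) :
    f i = f 0 := by
  have key : ∀ n : ℕ, f (n : ZMod p) = f 0 := by
    intro n
    induction n with
    | zero => simp
    | succ n ih =>
      have h2 := h ((n + 1 : ℕ) : ZMod p)
      have he : ((n + 1 : ℕ) : ZMod p) - 1 = (n : ZMod p) := by push_cast; ring
      rw [he, ih] at h2
      exact h2.symm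
  have := key i.val
  rwa [ZMod.natCast_rightInverse i] at this

end Aux12


theorem statement1 (p : ℕ) (hp : p.Prime) :
    (∀ x y z : R12 p,
      x • u12raw p + y • b1raw p + z • b2raw p = 0 →
        ∃ y' y'' z' z'' : R12 p,
          x = z' * NN p (t2 p) + y' * NN p (t1 p) ∧
          y = -((of ℤ (G12t p) (t2 p) - 1) * y') + (of ℤ (G12t p) (t1 p) - 1) * y'' ∧
          z = (of ℤ (G12t p) (t1 p) - 1) * z' + (of ℤ (G12t p) (t2 p) - 1) * z'') ∧
    (of ℤ (G12t p) (t1 p) - 1) • b1raw p = 0 ∧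
    (of ℤ (G12t p) (t2 p) - 1) • b2raw p = 0 ∧
    (of ℤ (G12t p) (t2 p) - 1) • b1raw p = NN p (t1 p) • u12raw p ∧
    (-(of ℤ (G12t p) (t1 p) - 1)) • b2raw p = NN p (t2 p) • u12raw p := by
  haveI : NeZero p := ⟨hp.ne_zero⟩
  have hN1 : NN p (t1 p) * (of ℤ (G12t p) (t1 p) - 1) = 0 := NN_mul p _ (t1_pow_p p)
  have hN2 : NN p (t2 p) * (of ℤ (G12t p) (t2 p) - 1) = 0 := NN_mul p _ (t2_pow_p p)
  open Aux12 in
  refine ⟨?_, ?_, ?_, ?_, ?_⟩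
  · -- main statement
    intro x y z h
    classical
    rw [Prod.ext_iff] at h
    obtain ⟨h1, h2⟩ := h
    simp only [u12raw, b1raw, b2raw, Prod.smul_mk, Prod.fst_add, Prod.snd_add,
      smul_eq_mul, mul_zero, add_zero, zero_add, Prod.fst_zero, Prod.snd_zero] at h1 h2
    -- h1 : x * (of t2 - 1) + y * NN t1 = 0
    -- h2 : x * (-(of t1 - 1)) + z * NN t2 = 0
    have E1 : ∀ i j : ZMod p,
        x.coeff (ee p i (j - 1)) - x.coeff (ee p i j) + ∑ c : ZMod p, y.coeff (ee p c j) = 0 := by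
      intro i j
      have hc : (x * (of ℤ (G12t p) (t2 p) - 1) + y * NN p (t1 p)).coeff (ee p i j)
          = (0 : R12 p).coeff (ee p i j) := by rw [h1]
      rw [mul_sub, mul_one, MonoidAlgebra.of_apply, t2_eq_ee] at hc
      rw [MonoidAlgebra.coeff_add, Finsupp.add_apply, MonoidAlgebra.coeff_sub, Finsupp.sub_apply,
        coeff_mul_single, coeff_mul_NN1, MonoidAlgebra.coeff_zero, Finsupp.coe_zero, Pi.zero_apply, sub_zero] at hc
      exact hc
    have E2 : ∀ i j : ZMod p,
        -(x.coeff (ee p (i - 1) j) - x.coeff (ee p i j)) + ∑ c : ZMod p, z.coeff (ee p i c) = 0 := by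
      intro i j
      have hc : (x * -(of ℤ (G12t p) (t1 p) - 1) + z * NN p (t2 p)).coeff (ee p i j)
          = (0 : R12 p).coeff (ee p i j) := by rw [h2]
      rw [mul_neg, mul_sub, mul_one, MonoidAlgebra.of_apply, t1_eq_ee] at hc
      rw [MonoidAlgebra.coeff_add, Finsupp.add_apply, MonoidAlgebra.coeff_neg, Finsupp.neg_apply,
        MonoidAlgebra.coeff_sub, Finsupp.sub_apply, coeff_mul_single,
        coeff_mul_NN2, MonoidAlgebra.coeff_zero, Finsupp.coe_zero, Pi.zero_apply, sub_zero] at hc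
      exact hc
    have key : ∀ i j : ZMod p,
        x.coeff (ee p i j) = x.coeff (ee p i 0) + (x.coeff (ee p 0 j) - x.coeff (ee p 0 0)) := by
      intro i j
      have step : ∀ i' : ZMod p,
          (fun a => x.coeff (ee p a j) - x.coeff (ee p a 0)) (i' - 1)
            = (fun a => x.coeff (ee p a j) - x.coeff (ee p a 0)) i' := by
        intro i'
        have e2j := E2 i' j
        have e20 := E2 i' 0
        simp only
        linarith
      have := const_of_step (p := p) (fun a => x.coeff (ee p a j) - x.coeff (ee p a 0)) step i
      linarith
    set Y' : ZMod p → ZMod p → ℤ :=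
      fun a b => if a = 0 then x.coeff (ee p 0 b) - x.coeff (ee p 0 0) else 0 with hY'def
    set Z' : ZMod p → ZMod p → ℤ := fun a b => if b = 0 then x.coeff (ee p a 0) else 0 with hZ'def
    set W : ZMod p → ZMod p → ℤ :=
      fun a b => y.coeff (ee p a b) + (Y' a (b - 1) - Y' a b) with hWdef
    set V : ZMod p → ZMod p → ℤ :=
      fun a b => z.coeff (ee p a b) - (Z' (a - 1) b - Z' a b) with hVdef
    have sumY' : ∀ b : ZMod p, ∑ c : ZMod p, Y' c b = x.coeff (ee p 0 b) - x.coeff (ee p 0 0) := by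
      intro b
      rw [hY'def]
      rw [Finset.sum_ite_eq' Finset.univ (0 : ZMod p)
        (fun _ => x.coeff (ee p 0 b) - x.coeff (ee p 0 0))]
      simp
    have sumZ' : ∀ a : ZMod p, ∑ c : ZMod p, Z' a c = x.coeff (ee p a 0) := by
      intro a
      rw [hZ'def]
      rw [Finset.sum_ite_eq' Finset.univ (0 : ZMod p) (fun _ => x.coeff (ee p a 0))]
      simp
    have hWsum : ∀ b : ZMod p, ∑ c : ZMod p, W c b = 0 := by
      intro b
      have e1 := E1 0 b
      rw [hWdef]
      rw [Finset.sum_add_distrib, Finset.sum_sub_distrib, sumY', sumY']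
      linarith
    have hVsum : ∀ a : ZMod p, ∑ c : ZMod p, V a c = 0 := by
      intro a
      have e2 := E2 a 0
      rw [hVdef]
      rw [Finset.sum_sub_distrib, Finset.sum_sub_distrib, sumZ', sumZ']
      linarith
    refine ⟨mk p Y', mk p (fun a b => bld p (fun c => W c b) a), mk p Z',
      mk p (fun a b => bld p (fun c => V a c) b), ?_, ?_, ?_⟩
    · refine MonoidAlgebra.coeff_injective <| Finsupp.ext fun g => ?_
      obtain ⟨⟨i, j⟩, rfl⟩ : ∃ q : ZMod p × ZMod p, Multiplicative.ofAdd q = g :=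
        ⟨Multiplicative.toAdd g, rfl⟩
      have hg : Multiplicative.ofAdd ((i, j) : ZMod p × ZMod p) = ee p i j := rfl
      rw [hg, MonoidAlgebra.coeff_add, Finsupp.add_apply, coeff_mul_NN2, coeff_mul_NN1]
      simp only [mk_apply]
      rw [sumZ', sumY']
      exact key i j
    · refine MonoidAlgebra.coeff_injective <| Finsupp.ext fun g => ?_
      obtain ⟨⟨i, j⟩, rfl⟩ : ∃ q : ZMod p × ZMod p, Multiplicative.ofAdd q = g :=
        ⟨Multiplicative.toAdd g, rfl⟩
      have hg : Multiplicative.ofAdd ((i, j) : ZMod p × ZMod p) = ee p i j := rfl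
      rw [hg, MonoidAlgebra.coeff_add, Finsupp.add_apply, MonoidAlgebra.coeff_neg, Finsupp.neg_apply, sub_mul, one_mul, sub_mul, one_mul,
        MonoidAlgebra.of_apply, MonoidAlgebra.of_apply, t1_eq_ee, t2_eq_ee,
        MonoidAlgebra.coeff_sub, Finsupp.sub_apply, MonoidAlgebra.coeff_sub, Finsupp.sub_apply,
        coeff_single_mul, coeff_single_mul]
      simp only [mk_apply, sub_zero]
      have hb := bld_step hp.one_lt (fun c => W c j) (hWsum j) i
      rw [hb]
      rw [hWdef]
      ring
    · refine MonoidAlgebra.coeff_injective <| Finsupp.ext fun g => ?_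
      obtain ⟨⟨i, j⟩, rfl⟩ : ∃ q : ZMod p × ZMod p, Multiplicative.ofAdd q = g :=
        ⟨Multiplicative.toAdd g, rfl⟩
      have hg : Multiplicative.ofAdd ((i, j) : ZMod p × ZMod p) = ee p i j := rfl
      rw [hg, MonoidAlgebra.coeff_add, Finsupp.add_apply, sub_mul, one_mul, sub_mul, one_mul,
        MonoidAlgebra.of_apply, MonoidAlgebra.of_apply, t1_eq_ee, t2_eq_ee,
        MonoidAlgebra.coeff_sub, Finsupp.sub_apply, MonoidAlgebra.coeff_sub, Finsupp.sub_apply,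
        coeff_single_mul, coeff_single_mul]
      simp only [mk_apply, sub_zero]
      have hb := bld_step hp.one_lt (fun c => V i c) (hVsum i) j
      rw [hb]
      rw [hVdef]
      ring
  · rw [b1raw, Prod.smul_mk, smul_eq_mul, smul_eq_mul, mul_zero, mul_comm, hN1]
    rfl
  · rw [b2raw, Prod.smul_mk, smul_eq_mul, smul_eq_mul, mul_zero, mul_comm, hN2]
    rfl
  · rw [b1raw, u12raw, Prod.smul_mk, Prod.smul_mk]
    simp only [smul_eq_mul, mul_zero]
    refine Prod.ext ?_ ?_
    · exact mul_comm _ _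
    · show (0 : R12 p) = NN p (t1 p) * -(of ℤ (G12t p) (t1 p) - 1)
      rw [mul_neg, hN1, neg_zero]
  · rw [b2raw, u12raw, Prod.smul_mk, Prod.smul_mk]
    simp only [smul_eq_mul, mul_zero]
    refine Prod.ext ?_ ?_
    · show (0 : R12 p) = NN p (t2 p) * (of ℤ (G12t p) (t2 p) - 1)
      rw [hN2]
    · exact mul_comm _ _


end
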